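/- arXiv:1905.12695 — 5 statements merged into one kernel-verified Lean document; each statement's English description precedes it below -/
import Mathlib

section
/- Let n be a positive integer and let A, B be real n×n matrices such that I − AᵀA is positive semidefinite, I − BᵀB is positive definite, and B has rank n. Then det((I − AᵀA)(I − BᵀB)) ≤ (det(I − AᵀB))². -/
open Matrix
open scoped MatrixOrder

variable {n : ℕ}

lemma psd_det_nonneg {M : Matrix (Fin n) (Fin n) ℝ} (hM : M.PosSemidef) : 0 ≤ M.det := by
  rw [hM.isHermitian.det_eq_prod_eigenvalues]
  exact Finset.prod_nonneg fun i _ => by simpa using hM.eigenvalues_nonneg i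

lemma one_le_det_one_add {Q : Matrix (Fin n) (Fin n) ℝ} (hQ : Q.PosSemidef) :
    1 ≤ (1 + Q).det := by
  have h := hQ.isHermitian
  set U : Matrix (Fin n) (Fin n) ℝ := (h.eigenvectorUnitary : Matrix (Fin n) (Fin n) ℝ)
  have hU : U * star U = 1 := Matrix.mem_unitaryGroup_iff.mp h.eigenvectorUnitary.2
  have hQe : (1 : Matrix (Fin n) (Fin n) ℝ) + Q
      = U * (1 + diagonal (RCLike.ofReal ∘ h.eigenvalues)) * star U := by
    rw [mul_add, add_mul, mul_one, hU, ← Unitary.conjStarAlgAut_apply (S := ℝ) h.eigenvectorUnitary,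
      ← h.spectral_theorem]
  rw [hQe, Matrix.det_mul_right_comm, hU, one_mul]
  have : (1 : Matrix (Fin n) (Fin n) ℝ) + diagonal (RCLike.ofReal ∘ h.eigenvalues)
      = diagonal (fun i => 1 + h.eigenvalues i) := by
    rw [← diagonal_one, diagonal_add]
    congr 1
  rw [this, det_diagonal]
  calc (1:ℝ) = ∏ _i : Fin n, 1 := by simp
  _ ≤ ∏ i, (1 + h.eigenvalues i) := by
      refine Finset.prod_le_prod (fun i _ => by norm_num) (fun i _ => ?_)
      linarith [hQ.eigenvalues_nonneg i]

lemma det_le_det_add {M P : Matrix (Fin n) (Fin n) ℝ} (hM : M.PosSemidef)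
    (hP : P.PosSemidef) : M.det ≤ (M + P).det := by
  rcases eq_or_ne M.det 0 with h0 | h0
  · rw [h0]; exact psd_det_nonneg (hM.add hP)
  · set R := CFC.sqrt M with hR
    have hRR : R * R = M := CFC.sqrt_mul_sqrt_self M hM.nonneg
    have hRdet : IsUnit R.det := by
      refine isUnit_iff_ne_zero.mpr fun hz => h0 ?_
      rw [← hRR, det_mul, hz, mul_zero]
    have hRH : Rᵀ = R := by
      have := (CFC.sqrt_nonneg M).posSemidef.isHermitian
      simpa [Matrix.IsHermitian, Matrix.conjTranspose_eq_transpose_of_trivial] using this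
    have hRiH : R⁻¹ᵀ = R⁻¹ := by rw [Matrix.transpose_nonsing_inv, hRH]
    have hQ : (R⁻¹ * P * R⁻¹).PosSemidef := by
      have := hP.mul_mul_conjTranspose_same R⁻¹
      rwa [Matrix.conjTranspose_eq_transpose_of_trivial, hRiH] at this
    have hdecomp : M + P = R * (1 + R⁻¹ * P * R⁻¹) * R := by
      rw [mul_add, add_mul, mul_one, hRR]
      congr 1
      symm
      calc R * (R⁻¹ * P * R⁻¹) * R = (R * R⁻¹) * P * (R⁻¹ * R) := by
            simp only [mul_assoc]
      _ = P := by rw [Matrix.mul_nonsing_inv _ hRdet, Matrix.nonsing_inv_mul _ hRdet,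
            one_mul, mul_one]
    have h1 : 1 ≤ (1 + R⁻¹ * P * R⁻¹).det := one_le_det_one_add hQ
    have hMdet : M.det = R.det * R.det := by rw [← hRR, det_mul]
    rw [hdecomp, det_mul, det_mul, hMdet]
    nlinarith [sq_nonneg R.det]

lemma dot_cs (v w : Fin n → ℝ) : (v ⬝ᵥ w) ^ 2 ≤ (v ⬝ᵥ v) * (w ⬝ᵥ w) := by
  simpa [dotProduct, sq] using Finset.sum_mul_sq_le_sq_mul_sq Finset.univ v w

lemma dot_self_pos {x : Fin n → ℝ} (hx : x ≠ 0) : 0 < x ⬝ᵥ x := by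
  have := (Matrix.PosDef.one (n := Fin n) (R := ℝ)).dotProduct_mulVec_pos hx
  simpa using this

lemma dot_shift (B : Matrix (Fin n) (Fin n) ℝ) (x y : Fin n → ℝ) :
    x ⬝ᵥ (B *ᵥ y) = (Bᵀ *ᵥ x) ⬝ᵥ y := by
  rw [Matrix.mulVec_transpose, Matrix.dotProduct_mulVec]

lemma posdef_swap {B : Matrix (Fin n) (Fin n) ℝ} (hB : (1 - Bᵀ * B).PosDef) :
    (1 - B * Bᵀ).PosDef := by
  have key : ∀ z : Fin n → ℝ, z ≠ 0 → (B *ᵥ z) ⬝ᵥ (B *ᵥ z) < z ⬝ᵥ z := by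
    intro z hz
    have h := hB.dotProduct_mulVec_pos hz
    simp only [star_trivial, Matrix.sub_mulVec, Matrix.one_mulVec, dotProduct_sub,
      ← Matrix.mulVec_mulVec] at h
    rw [dot_shift, Matrix.transpose_transpose] at h
    linarith
  refine posDef_iff_dotProduct_mulVec.mpr ⟨?_, ?_⟩
  · have : (1 - B * Bᵀ)ᵀ = 1 - B * Bᵀ := by
      simp [Matrix.transpose_sub, Matrix.transpose_mul]
    simpa [Matrix.IsHermitian, Matrix.conjTranspose_eq_transpose_of_trivial] using this
  · intro x hx
    have hval : star x ⬝ᵥ ((1 - B * Bᵀ) *ᵥ x) = x ⬝ᵥ x - (Bᵀ *ᵥ x) ⬝ᵥ (Bᵀ *ᵥ x) := by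
      simp only [star_trivial, Matrix.sub_mulVec, Matrix.one_mulVec, dotProduct_sub,
        ← Matrix.mulVec_mulVec]
      rw [dot_shift]
    rw [hval]
    set y := Bᵀ *ᵥ x with hy
    rcases eq_or_ne y 0 with h0 | h0
    · rw [h0]
      simpa using dot_self_pos hx
    · have h1 := key y h0
      have h2 : x ⬝ᵥ (B *ᵥ y) = y ⬝ᵥ y := by rw [dot_shift, ← hy]
      have h3 := dot_cs x (B *ᵥ y)
      have h4 := dot_self_pos h0
      have h5 := dot_self_pos hx
      nlinarith [h1, h2, h3, h4, h5]

/-- **Hua's determinant inequality.** Let `A, B` be real `n × n` matrices such that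
`I - AᵀA` is positive semidefinite, `I - BᵀB` is positive definite, and `B` has rank `n`.
Then `det((I - AᵀA)(I - BᵀB)) ≤ (det (I - AᵀB))²`. -/
theorem hua_det_inequality (n : ℕ) (hn : 0 < n) (A B : Matrix (Fin n) (Fin n) ℝ)
    (hA : (1 - Aᵀ * A).PosSemidef) (hB : (1 - Bᵀ * B).PosDef) (hrank : B.rank = n) :
    ((1 - Aᵀ * A) * (1 - Bᵀ * B)).det ≤ (1 - Aᵀ * B).det ^ 2 := by
  set C : Matrix (Fin n) (Fin n) ℝ := 1 - Bᵀ * B with hCdef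
  set D : Matrix (Fin n) (Fin n) ℝ := 1 - B * Bᵀ with hDdef
  have hD : D.PosDef := posdef_swap hB
  have hCpos : 0 < C.det := hB.det_pos
  have hCdet : IsUnit C.det := isUnit_iff_ne_zero.mpr hCpos.ne'
  have hDdet : IsUnit D.det := isUnit_iff_ne_zero.mpr hD.det_pos.ne'
  have hCs : Cᵀ = C := by simp [hCdef, Matrix.transpose_sub, Matrix.transpose_mul]
  have hDs : Dᵀ = D := by simp [hDdef, Matrix.transpose_sub, Matrix.transpose_mul]
  have hcomm : B * C = D * B := by rw [hCdef, hDdef]; noncomm_ring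
  have h1 : B * C⁻¹ = D⁻¹ * B := by
    calc B * C⁻¹ = (D⁻¹ * D) * (B * C⁻¹) := by
          rw [Matrix.nonsing_inv_mul _ hDdet, one_mul]
    _ = D⁻¹ * (D * B * C⁻¹) := by simp only [mul_assoc]
    _ = D⁻¹ * (B * C * C⁻¹) := by rw [← hcomm]
    _ = D⁻¹ * (B * (C * C⁻¹)) := by simp only [mul_assoc]
    _ = D⁻¹ * B := by rw [Matrix.mul_nonsing_inv _ hCdet, mul_one]
  have h2 : C⁻¹ * Bᵀ = Bᵀ * D⁻¹ := by
    have := congrArg Matrix.transpose h1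
    simp only [Matrix.transpose_mul, Matrix.transpose_nonsing_inv, hCs, hDs] at this
    exact this
  have h4 : B * C⁻¹ * Bᵀ = D⁻¹ - 1 := by
    rw [h1, mul_assoc]
    have hBB : B * Bᵀ = 1 - D := by rw [hDdef]; noncomm_ring
    rw [hBB, mul_sub, mul_one, Matrix.nonsing_inv_mul _ hDdet]
  have h3 : C⁻¹ = 1 + Bᵀ * D⁻¹ * B := by
    apply Matrix.inv_eq_right_inv
    have hCB : C * Bᵀ = Bᵀ * D := by
      have := congrArg Matrix.transpose hcomm
      simp only [Matrix.transpose_mul, hCs, hDs] at this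
      exact this
    calc C * (1 + Bᵀ * D⁻¹ * B) = C + (C * Bᵀ) * (D⁻¹ * B) := by noncomm_ring
    _ = C + Bᵀ * ((D * D⁻¹) * B) := by rw [hCB]; simp only [mul_assoc]
    _ = C + Bᵀ * B := by rw [Matrix.mul_nonsing_inv _ hDdet, one_mul]
    _ = 1 := by rw [hCdef]; noncomm_ring
  have key : (1 - Aᵀ * B) * C⁻¹ * (1 - Bᵀ * A)
      = (1 - Aᵀ * A) + (Aᵀ - Bᵀ) * D⁻¹ * (A - B) := by
    calc (1 - Aᵀ * B) * C⁻¹ * (1 - Bᵀ * A)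
        = C⁻¹ - C⁻¹ * Bᵀ * A - Aᵀ * (B * C⁻¹) + Aᵀ * (B * C⁻¹ * Bᵀ) * A := by noncomm_ring
    _ = C⁻¹ - C⁻¹ * Bᵀ * A - Aᵀ * (D⁻¹ * B) + Aᵀ * (D⁻¹ - 1) * A := by rw [h4, h1]
    _ = (1 + Bᵀ * D⁻¹ * B) - Bᵀ * D⁻¹ * A - Aᵀ * (D⁻¹ * B) + Aᵀ * (D⁻¹ - 1) * A := by
        rw [h2, h3]
    _ = (1 - Aᵀ * A) + (Aᵀ - Bᵀ) * D⁻¹ * (A - B) := by noncomm_ring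
  have hP : ((Aᵀ - Bᵀ) * D⁻¹ * (A - B)).PosSemidef := by
    have hDinv : D⁻¹.PosSemidef := hD.inv.posSemidef
    have := hDinv.mul_mul_conjTranspose_same (A - B)ᵀ
    rwa [Matrix.conjTranspose_eq_transpose_of_trivial, Matrix.transpose_transpose,
      Matrix.transpose_sub] at this
  have hmono : (1 - Aᵀ * A).det ≤ ((1 - Aᵀ * B) * C⁻¹ * (1 - Bᵀ * A)).det := by
    rw [key]
    exact det_le_det_add hA hP
  have hTdet : (1 - Bᵀ * A).det = (1 - Aᵀ * B).det := by
    rw [← Matrix.det_transpose (1 - Bᵀ * A)]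
    congr 1
    simp [Matrix.transpose_sub, Matrix.transpose_mul]
  have hNdet : ((1 - Aᵀ * B) * C⁻¹ * (1 - Bᵀ * A)).det
      = (1 - Aᵀ * B).det ^ 2 * (C.det)⁻¹ := by
    rw [det_mul, det_mul, hTdet, Matrix.det_nonsing_inv, Ring.inverse_eq_inv]
    ring
  rw [det_mul]
  have := mul_le_mul_of_nonneg_right hmono hCpos.le
  rw [hNdet] at this
  calc (1 - Aᵀ * A).det * C.det ≤ (1 - Aᵀ * B).det ^ 2 * (C.det)⁻¹ * C.det := this
  _ = (1 - Aᵀ * B).det ^ 2 := by field_simp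
end

section
/- Let n be a positive integer, let D = Diag(d₁, …, d_n) be a diagonal real n×n matrix with 1 > d₁ ≥ d₂ ≥ … ≥ d_n > 0, and write D^{1/2} = Diag(√d₁, …, √d_n). Let Q be a symmetric real n×n matrix with D ⪯ Q ⪯ D⁻¹. Then det((I − D^{1/2}Q⁻¹D^{1/2})(I − D^{1/2}Q D^{1/2})) ≤ det((I − D)²), and if moreover Q ≠ I then the inequality is strict. -/
open Matrix


lemma auxSmulPS {n : ℕ} {c : ℝ} (hc : 0 ≤ c) {M : Matrix (Fin n) (Fin n) ℝ}
    (hM : M.PosSemidef) : (c • M).PosSemidef := by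
  refine .of_dotProduct_mulVec_nonneg ?_ fun x => ?_
  · unfold Matrix.IsHermitian
    rw [conjTranspose_smul, hM.1]
    norm_num
  · rw [smul_mulVec, dotProduct_smul, smul_eq_mul]
    exact mul_nonneg hc (hM.dotProduct_mulVec_nonneg x)

lemma auxDetNonneg {n : ℕ} {M : Matrix (Fin n) (Fin n) ℝ} (hM : M.PosSemidef) : 0 ≤ M.det := by
  rw [hM.1.det_eq_prod_eigenvalues]
  exact Finset.prod_nonneg fun i _ => hM.eigenvalues_nonneg i

lemma aux1 {n : ℕ} {P : Matrix (Fin n) (Fin n) ℝ} (hP : P.PosSemidef) :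
    P.det ≤ (((1:ℝ)/2) • (1 + P)).det ^ 2 := by
  have hH := hP.1
  set U : Matrix (Fin n) (Fin n) ℝ := (IsHermitian.eigenvectorUnitary hH : Matrix (Fin n) (Fin n) ℝ) with hUdef
  have hUU : U * star U = 1 := Matrix.mem_unitaryGroup_iff.mp (IsHermitian.eigenvectorUnitary hH).2
  have hspec : P = U * diagonal hH.eigenvalues * star U := by
    have := hH.spectral_theorem
    simpa using this
  have key : ((1:ℝ)/2) • (1 + P) = U * diagonal (fun i => (1 + hH.eigenvalues i)/2) * star U := by
    have h1 : (1 : Matrix (Fin n) (Fin n) ℝ) = U * 1 * star U := by rw [mul_one, hUU]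
    conv_lhs => rw [hspec]
    conv_lhs => rw [show (1 : Matrix (Fin n) (Fin n) ℝ) = U * 1 * star U from h1]
    rw [← add_mul, ← mul_add, ← smul_mul_assoc, ← mul_smul_comm]
    congr 2
    ext i j
    by_cases h : i = j <;>
      simp [Matrix.diagonal_apply, Matrix.one_apply, h] <;> ring
  have hdet2 : (((1:ℝ)/2) • (1 + P)).det = ∏ i, (1 + hH.eigenvalues i)/2 := by
    rw [key, Matrix.det_mul_right_comm, hUU, one_mul, det_diagonal]
  have hdet1 : P.det = ∏ i, hH.eigenvalues i := by
    simpa using hH.det_eq_prod_eigenvalues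
  rw [hdet1, hdet2, ← Finset.prod_pow]
  refine Finset.prod_le_prod (fun i _ => hP.eigenvalues_nonneg i) (fun i _ => ?_)
  nlinarith [sq_nonneg (1 - hH.eigenvalues i)]

lemma aux2 {n : ℕ} {A : Matrix (Fin n) (Fin n) ℝ} (hA : A.PosSemidef)
    (h1 : (1 - A).PosSemidef) : A.det ≤ 1 ∧ (A ≠ 1 → A.det < 1) := by
  have hH := hA.1
  set U : Matrix (Fin n) (Fin n) ℝ := (IsHermitian.eigenvectorUnitary hH : Matrix (Fin n) (Fin n) ℝ) with hUdef
  have hUU : U * star U = 1 := Matrix.mem_unitaryGroup_iff.mp (IsHermitian.eigenvectorUnitary hH).2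
  have hUsU : star U * U = 1 := by
    have := (IsHermitian.eigenvectorUnitary hH).2
    rw [Matrix.mem_unitaryGroup_iff'] at this
    exact this
  have hspec : A = U * diagonal hH.eigenvalues * star U := by
    simpa using hH.spectral_theorem
  have hdiag : star U * A * U = diagonal hH.eigenvalues := by
    conv_lhs => rw [hspec]
    simp only [← mul_assoc, hUsU, one_mul]
    rw [mul_assoc, hUsU, mul_one]
  have hl0 : ∀ i, 0 ≤ hH.eigenvalues i := fun i => hA.eigenvalues_nonneg i
  have hl1 : ∀ i, hH.eigenvalues i ≤ 1 := by
    have hps : (star U * (1 - A) * U).PosSemidef := by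
      have := h1.conjTranspose_mul_mul_same (B := U)
      simpa [star_eq_conjTranspose] using this
    have e : star U * (1 - A) * U = diagonal (fun i => 1 - hH.eigenvalues i) := by
      rw [Matrix.mul_sub, Matrix.sub_mul, mul_one, hUsU, hdiag]
      ext i j
      by_cases h : i = j <;> simp [Matrix.diagonal_apply, Matrix.one_apply, h]
    rw [e, posSemidef_diagonal_iff] at hps
    intro i
    linarith [hps i]
  have hdet : A.det = ∏ i, hH.eigenvalues i := by simpa using hH.det_eq_prod_eigenvalues
  constructor
  · rw [hdet]
    exact Finset.prod_le_one (fun i _ => hl0 i) (fun i _ => hl1 i)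
  · intro hne
    by_cases hall : ∀ i, hH.eigenvalues i = 1
    · exfalso
      apply hne
      have : diagonal hH.eigenvalues = (1 : Matrix (Fin n) (Fin n) ℝ) := by
        rw [show hH.eigenvalues = fun _ => 1 from funext hall, diagonal_one]
      rw [hspec, this, mul_one, hUU]
    · push_neg at hall
      obtain ⟨i, hi⟩ := hall
      have hilt : hH.eigenvalues i < 1 := lt_of_le_of_ne (hl1 i) hi
      rw [hdet, ← Finset.mul_prod_erase Finset.univ _ (Finset.mem_univ i)]
      have hp0 : 0 ≤ ∏ j ∈ Finset.univ.erase i, hH.eigenvalues j :=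
        Finset.prod_nonneg fun j _ => hl0 j
      have hp1 : ∏ j ∈ Finset.univ.erase i, hH.eigenvalues j ≤ 1 :=
        Finset.prod_le_one (fun j _ => hl0 j) (fun j _ => hl1 j)
      nlinarith [hl0 i]

open scoped MatrixOrder in
lemma auxSqrt {n : ℕ} {M : Matrix (Fin n) (Fin n) ℝ} (h : M.PosSemidef) :
    ∃ C : Matrix (Fin n) (Fin n) ℝ, C.PosSemidef ∧ C * C = M :=
  ⟨CFC.sqrt M, (CFC.sqrt_nonneg M).posSemidef, CFC.sqrt_mul_sqrt_self M h.nonneg⟩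

lemma aux3 {n : ℕ} {P : Matrix (Fin n) (Fin n) ℝ} (hP : P.PosDef)
    (h : (P - 1).PosSemidef) : (1 - P⁻¹).PosSemidef := by
  have hPi := hP.inv
  obtain ⟨C, hC, hCC⟩ : ∃ C : Matrix (Fin n) (Fin n) ℝ, C.PosSemidef ∧ C * C = P⁻¹ :=
    auxSqrt hPi.posSemidef
  have hPu : IsUnit P.det := (Matrix.isUnit_iff_isUnit_det P).mp hP.isUnit
  haveI := P.invertibleOfIsUnitDet hPu
  have hcomm : C * P = P * C := by
    have h1 : C * P⁻¹ = P⁻¹ * C := by rw [← hCC, mul_assoc]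
    calc C * P = P * (P⁻¹ * (C * P)) := by rw [Matrix.mul_inv_cancel_left_of_invertible]
    _ = P * (P⁻¹ * C * P) := by rw [mul_assoc]
    _ = P * (C * P⁻¹ * P) := by rw [h1]
    _ = P * C := by rw [Matrix.inv_mul_cancel_right_of_invertible]
  have key : C * (P - 1) * C = 1 - P⁻¹ := by
    rw [Matrix.mul_sub, mul_one, Matrix.sub_mul, hCC]
    congr 1
    rw [mul_assoc, ← hcomm, ← mul_assoc, hCC, Matrix.nonsing_inv_mul _ hPu]
  have := h.mul_mul_conjTranspose_same (B := C)
  rw [show Cᴴ = C from hC.1, key] at this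
  exact this

lemma aux4 {n : ℕ} {M₁ M₂ : Matrix (Fin n) (Fin n) ℝ} (h₁ : M₁.PosSemidef)
    (h₂ : M₂.PosSemidef) :
    M₁.det * M₂.det ≤ (((1:ℝ)/2) • (M₁ + M₂)).det ^ 2 := by
  by_cases hdet : M₁.det = 0
  · rw [hdet, zero_mul]
    exact sq_nonneg _
  · obtain ⟨C, hC, hCC⟩ : ∃ C : Matrix (Fin n) (Fin n) ℝ, C.PosSemidef ∧ C * C = M₁ :=
      auxSqrt h₁
    have hCdet : C.det * C.det = M₁.det := by rw [← det_mul, hCC]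
    have hCu : IsUnit C.det := by
      rw [isUnit_iff_ne_zero]
      intro h0
      rw [h0, mul_zero] at hCdet
      exact hdet hCdet.symm
    haveI := C.invertibleOfIsUnitDet hCu
    set P := C⁻¹ * M₂ * C⁻¹ with hPdef
    have hCiH : (C⁻¹)ᴴ = C⁻¹ := hC.1.inv
    have hP : P.PosSemidef := by
      have := h₂.mul_mul_conjTranspose_same (B := C⁻¹)
      rwa [hCiH] at this
    have eM2 : C * P * C = M₂ := by
      rw [hPdef, mul_assoc C⁻¹ M₂ C⁻¹, Matrix.mul_inv_cancel_left_of_invertible,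
        Matrix.inv_mul_cancel_right_of_invertible]
    have eHalf : ((1:ℝ)/2) • (M₁ + M₂) = C * (((1:ℝ)/2) • (1 + P)) * C := by
      rw [mul_smul_comm, smul_mul_assoc]
      congr 1
      rw [Matrix.mul_add, Matrix.add_mul, mul_one, hCC, eM2]
    have hdets : (((1:ℝ)/2) • (M₁ + M₂)).det = C.det * (((1:ℝ)/2) • (1 + P)).det * C.det := by
      rw [eHalf, det_mul, det_mul]
    have hM2det : M₂.det = C.det * P.det * C.det := by rw [← eM2, det_mul, det_mul]
    have haux := aux1 hP
    rw [← hCdet, hM2det, hdets]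
    have h4 : (0:ℝ) ≤ (C.det*C.det)*(C.det*C.det) := mul_nonneg (mul_self_nonneg _) (mul_self_nonneg _)
    calc C.det*C.det*(C.det*P.det*C.det) = (C.det*C.det*(C.det*C.det))*P.det := by ring
    _ ≤ (C.det*C.det*(C.det*C.det))*((((1:ℝ)/2) • (1 + P)).det^2) :=
        mul_le_mul_of_nonneg_left haux h4
    _ = (C.det * (((1:ℝ)/2) • (1 + P)).det * C.det)^2 := by ring

/-- Let `D = diagonal d` with `1 > d 0 ≥ d 1 ≥ … ≥ d (n-1) > 0`, let
`D^{1/2} = diagonal (√d)`, and let `Q` be a symmetric real `n × n` matrix with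
`D ⪯ Q ⪯ D⁻¹` (Loewner order). Then
`det((I - D^{1/2} Q⁻¹ D^{1/2})(I - D^{1/2} Q D^{1/2})) ≤ det((I - D)(I - D))`, and the
inequality is strict whenever `Q ≠ I`. -/
theorem det_inequality_DQ (n : ℕ) (hn : 0 < n) (d : Fin n → ℝ)
    (hd : ∀ i, 0 < d i ∧ d i < 1) (hmono : Antitone d)
    (Q : Matrix (Fin n) (Fin n) ℝ) (hQsymm : Q.IsHermitian)
    (hDQ : (Q - Matrix.diagonal d).PosSemidef)
    (hQD : ((Matrix.diagonal d)⁻¹ - Q).PosSemidef) :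
    (((1 - Matrix.diagonal (fun i => Real.sqrt (d i)) * Q⁻¹ *
          Matrix.diagonal (fun i => Real.sqrt (d i))) *
      (1 - Matrix.diagonal (fun i => Real.sqrt (d i)) * Q *
          Matrix.diagonal (fun i => Real.sqrt (d i)))).det ≤
        ((1 - Matrix.diagonal d) * (1 - Matrix.diagonal d)).det) ∧
    (Q ≠ 1 →
      (((1 - Matrix.diagonal (fun i => Real.sqrt (d i)) * Q⁻¹ *
            Matrix.diagonal (fun i => Real.sqrt (d i))) *
        (1 - Matrix.diagonal (fun i => Real.sqrt (d i)) * Q *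
            Matrix.diagonal (fun i => Real.sqrt (d i)))).det <
          ((1 - Matrix.diagonal d) * (1 - Matrix.diagonal d)).det)) := by
  have hd0 : ∀ i, 0 < d i := fun i => (hd i).1
  have hd1 : ∀ i, d i < 1 := fun i => (hd i).2
  set S : Matrix (Fin n) (Fin n) ℝ := Matrix.diagonal (fun i => Real.sqrt (d i)) with hSdef
  set D : Matrix (Fin n) (Fin n) ℝ := Matrix.diagonal d with hDdef
  have hsq : ∀ i, Real.sqrt (d i) * Real.sqrt (d i) = d i :=
    fun i => Real.mul_self_sqrt (hd0 i).le
  have hspos : ∀ i, 0 < Real.sqrt (d i) := fun i => Real.sqrt_pos.mpr (hd0 i)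
  have hSS : S * S = D := by
    rw [hSdef, hDdef, diagonal_mul_diagonal]
    exact congrArg Matrix.diagonal (funext fun i => hsq i)
  have hSH : Sᴴ = S := by
    rw [hSdef, diagonal_conjTranspose]
    exact congrArg Matrix.diagonal (funext fun i => star_trivial _)
  have hDpd : D.PosDef := posDef_diagonal_iff.mpr hd0
  have hSu : IsUnit S.det := by
    rw [hSdef, det_diagonal]
    exact isUnit_iff_ne_zero.mpr (Finset.prod_ne_zero_iff.mpr fun i _ => (hspos i).ne')
  haveI := S.invertibleOfIsUnitDet hSu
  have hSinv : S⁻¹ = Matrix.diagonal (fun i => (Real.sqrt (d i))⁻¹) := by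
    refine Matrix.inv_eq_right_inv ?_
    rw [hSdef, diagonal_mul_diagonal, ← diagonal_one]
    exact congrArg Matrix.diagonal (funext fun i => mul_inv_cancel₀ (hspos i).ne')
  have hSiH : (S⁻¹)ᴴ = S⁻¹ := (Matrix.IsHermitian.inv hSH : _)
  have hDinv : D⁻¹ = Matrix.diagonal (fun i => (d i)⁻¹) := by
    refine Matrix.inv_eq_right_inv ?_
    rw [hDdef, diagonal_mul_diagonal, ← diagonal_one]
    exact congrArg Matrix.diagonal (funext fun i => mul_inv_cancel₀ (hd0 i).ne')
  have hSDS : S * D⁻¹ * S = 1 := by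
    rw [hDinv, hSdef, diagonal_mul_diagonal, diagonal_mul_diagonal, ← diagonal_one]
    refine congrArg Matrix.diagonal (funext fun i => ?_)
    show Real.sqrt (d i) * (d i)⁻¹ * Real.sqrt (d i) = 1
    rw [← hsq i]
    have := (hspos i).ne'
    field_simp
    rw [Real.sqrt_sq (hspos i).le]
  have hSiDSi : S⁻¹ * D * S⁻¹ = 1 := by
    rw [hSinv, hDdef, diagonal_mul_diagonal, diagonal_mul_diagonal, ← diagonal_one]
    refine congrArg Matrix.diagonal (funext fun i => ?_)
    show (Real.sqrt (d i))⁻¹ * d i * (Real.sqrt (d i))⁻¹ = 1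
    rw [← hsq i]
    have := (hspos i).ne'
    field_simp
    rw [Real.sqrt_sq (hspos i).le]
  have hQpd : Q.PosDef := by
    have h := hDpd.add_posSemidef hDQ
    have e : D + (Q - D) = Q := by abel
    rwa [e] at h
  have hQu : IsUnit Q.det := (Matrix.isUnit_iff_isUnit_det Q).mp hQpd.isUnit
  haveI := Q.invertibleOfIsUnitDet hQu
  have hQQi : Q * Q⁻¹ = 1 := Matrix.mul_nonsing_inv _ hQu
  have hQiQ : Q⁻¹ * Q = 1 := Matrix.nonsing_inv_mul _ hQu
  set M₁ : Matrix (Fin n) (Fin n) ℝ := 1 - S * Q⁻¹ * S with hM1def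
  set M₂ : Matrix (Fin n) (Fin n) ℝ := 1 - S * Q * S with hM2def
  have e2 : S * (D⁻¹ - Q) * S = M₂ := by
    rw [hM2def, mul_sub, sub_mul, hSDS]
  have hM2ps : M₂.PosSemidef := by
    have := hQD.mul_mul_conjTranspose_same (B := S)
    rwa [hSH, e2] at this
  set P : Matrix (Fin n) (Fin n) ℝ := S⁻¹ * Q * S⁻¹ with hPdef
  have eP1 : S⁻¹ * (Q - D) * S⁻¹ = P - 1 := by
    rw [hPdef, mul_sub, sub_mul, hSiDSi]
  have hP1 : (P - 1).PosSemidef := by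
    have := hDQ.mul_mul_conjTranspose_same (B := S⁻¹)
    rwa [hSiH, eP1] at this
  have hPpd : P.PosDef := by
    have h := Matrix.PosDef.one.add_posSemidef hP1
    have e : (1 : Matrix (Fin n) (Fin n) ℝ) + (P - 1) = P := by abel
    rwa [e] at h
  have ePinv : P⁻¹ = S * Q⁻¹ * S := by
    rw [hPdef, Matrix.mul_inv_rev, Matrix.mul_inv_rev,
      Matrix.nonsing_inv_nonsing_inv _ hSu, ← mul_assoc]
  have hM1ps : M₁.PosSemidef := by
    rw [hM1def, ← ePinv]
    exact aux3 hPpd hP1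
  set H : Matrix (Fin n) (Fin n) ℝ := ((1:ℝ)/2) • (M₁ + M₂) with hHdef
  have hHps : H.PosSemidef := auxSmulPS (by norm_num) (hM1ps.add hM2ps)
  set N : Matrix (Fin n) (Fin n) ℝ := 1 - D with hNdef
  set W : Matrix (Fin n) (Fin n) ℝ := Q + Q⁻¹ - 1 - 1 with hWdef
  have eSWS : S * W * S = S * Q * S + S * Q⁻¹ * S - D - D := by
    rw [hWdef, mul_sub, mul_sub, mul_add, mul_one, sub_mul, sub_mul, add_mul, hSS]
  have eNH : N - H = ((1:ℝ)/2) • (S * W * S) := by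
    rw [eSWS, hNdef, hHdef, hM1def, hM2def]
    module
  have hq1h : (Q - 1)ᴴ = Q - 1 := by
    rw [conjTranspose_sub, conjTranspose_one, hQsymm.eq]
  have eW : (Q - 1) * Q⁻¹ * (Q - 1) = W := by
    rw [show (Q - 1) * Q⁻¹ = 1 - Q⁻¹ by rw [sub_mul, one_mul, hQQi],
      sub_mul, one_mul, mul_sub, mul_one, hQiQ, hWdef]
    abel
  have hWps : W.PosSemidef := by
    have := hQpd.inv.posSemidef.mul_mul_conjTranspose_same (B := Q - 1)
    rwa [hq1h, eW] at this
  have hNHps : (N - H).PosSemidef := by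
    rw [eNH]
    refine auxSmulPS (by norm_num) ?_
    have := hWps.mul_mul_conjTranspose_same (B := S)
    rwa [hSH] at this
  -- the T matrix
  have h1d : ∀ i, 0 < 1 - d i := fun i => by linarith [hd1 i]
  have hsq1 : ∀ i, Real.sqrt (1 - d i) * Real.sqrt (1 - d i) = 1 - d i :=
    fun i => Real.mul_self_sqrt (h1d i).le
  have hs1pos : ∀ i, 0 < Real.sqrt (1 - d i) := fun i => Real.sqrt_pos.mpr (h1d i)
  set T : Matrix (Fin n) (Fin n) ℝ := Matrix.diagonal (fun i => (Real.sqrt (1 - d i))⁻¹)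
    with hTdef
  have hTH : Tᴴ = T := by
    rw [hTdef, diagonal_conjTranspose]
    exact congrArg Matrix.diagonal (funext fun i => star_trivial _)
  have hTu : IsUnit T.det := by
    rw [hTdef, det_diagonal]
    exact isUnit_iff_ne_zero.mpr
      (Finset.prod_ne_zero_iff.mpr fun i _ => inv_ne_zero (hs1pos i).ne')
  haveI := T.invertibleOfIsUnitDet hTu
  have eN : N = Matrix.diagonal (fun i => 1 - d i) := by
    rw [hNdef, hDdef, ← diagonal_one, diagonal_sub]
  have hTNT : T * N * T = 1 := by
    rw [eN, hTdef, diagonal_mul_diagonal, diagonal_mul_diagonal, ← diagonal_one]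
    refine congrArg Matrix.diagonal (funext fun i => ?_)
    show (Real.sqrt (1 - d i))⁻¹ * (1 - d i) * (Real.sqrt (1 - d i))⁻¹ = 1
    rw [← hsq1 i]
    have := (hs1pos i).ne'
    field_simp
    rw [Real.sqrt_sq (hs1pos i).le]
  set A : Matrix (Fin n) (Fin n) ℝ := T * H * T with hAdef
  have hAps : A.PosSemidef := by
    have := hHps.mul_mul_conjTranspose_same (B := T)
    rwa [hTH] at this
  have h1A : (1 - A).PosSemidef := by
    have e : T * (N - H) * T = 1 - A := by
      rw [mul_sub, sub_mul, hTNT, hAdef]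
    have := hNHps.mul_mul_conjTranspose_same (B := T)
    rwa [hTH, e] at this
  have hdetA : A.det = T.det * H.det * T.det := by
    rw [hAdef, det_mul, det_mul]
  have hNT1 : N.det * (T.det * T.det) = 1 := by
    rw [eN, hTdef, det_diagonal, det_diagonal, ← Finset.prod_mul_distrib,
      ← Finset.prod_mul_distrib]
    apply Finset.prod_eq_one
    intro i _
    rw [← mul_inv, hsq1 i, mul_inv_cancel₀ (h1d i).ne']
  have hdetNpos : 0 < N.det := by
    rw [eN, det_diagonal]
    exact Finset.prod_pos fun i _ => h1d i
  have hHN : H.det = N.det * A.det := by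
    rw [hdetA, show N.det * (T.det * H.det * T.det)
      = (N.det * (T.det * T.det)) * H.det by ring, hNT1, one_mul]
  obtain ⟨hA1, hA2⟩ := aux2 hAps h1A
  have hHd0 : 0 ≤ H.det := auxDetNonneg hHps
  have hdetH_le : H.det ≤ N.det := by
    rw [hHN]
    exact mul_le_of_le_one_right hdetNpos.le hA1
  have hmain := aux4 hM1ps hM2ps
  constructor
  · rw [det_mul, det_mul]
    calc M₁.det * M₂.det ≤ H.det ^ 2 := hmain
    _ ≤ N.det ^ 2 := pow_le_pow_left₀ hHd0 hdetH_le 2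
    _ = N.det * N.det := by ring
  · intro hQne
    have hAne : A ≠ 1 := by
      intro hA1'
      apply hQne
      have hsand : ∀ X : Matrix (Fin n) (Fin n) ℝ, T⁻¹ * (T * X * T) * T⁻¹ = X := by
        intro X
        rw [mul_assoc T X T, Matrix.inv_mul_cancel_left_of_invertible,
          Matrix.mul_inv_cancel_right_of_invertible]
      have hHNeq : H = N := by
        have e1 : T * H * T = T * N * T := by rw [← hAdef, hA1', hTNT]
        have := congrArg (fun X => T⁻¹ * X * T⁻¹) e1
        simpa [hsand H, hsand N] using this
      have hSWS : S * W * S = 0 := by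
        have : N - H = 0 := by rw [hHNeq, sub_self]
        rw [eNH] at this
        rcases smul_eq_zero.mp this with h | h
        · norm_num at h
        · exact h
      have hW0 : W = 0 := by
        have hsandS : S⁻¹ * (S * W * S) * S⁻¹ = W := by
          rw [mul_assoc S W S, Matrix.inv_mul_cancel_left_of_invertible,
            Matrix.mul_inv_cancel_right_of_invertible]
        rw [hSWS] at hsandS
        simpa using hsandS.symm
      -- W = 0 implies Q = 1
      have hW0' : (Q - 1) * Q⁻¹ * (Q - 1) = 0 := by rw [eW, hW0]
      have hkey : ∀ x : Fin n → ℝ,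
          star ((Q - 1) *ᵥ x) ⬝ᵥ (Q⁻¹ *ᵥ ((Q - 1) *ᵥ x)) = 0 := by
        intro x
        have h1 : ((Q - 1)ᴴ * Q⁻¹ * (Q - 1)) = 0 := by rw [hq1h]; exact hW0'
        have e : star ((Q - 1) *ᵥ x) ⬝ᵥ (Q⁻¹ *ᵥ ((Q - 1) *ᵥ x))
            = star x ⬝ᵥ (((Q - 1)ᴴ * Q⁻¹ * (Q - 1)) *ᵥ x) := by
          simp only [star_mulVec, dotProduct_mulVec, vecMul_vecMul, mulVec_mulVec,
            mul_assoc]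
        rw [e, h1, zero_mulVec, dotProduct_zero]
      have hBx : ∀ x, (Q - 1) *ᵥ x = 0 := by
        intro x
        have h0 := (hQpd.inv.posSemidef.dotProduct_mulVec_zero_iff ((Q - 1) *ᵥ x)).mp (hkey x)
        have h2 := congrArg (fun v => Q *ᵥ v) h0
        simpa [mulVec_mulVec, hQQi] using h2
      have : Q - 1 = 0 := by
        ext i j
        have := congrFun (hBx (Pi.single j 1)) i
        simpa [Matrix.mulVec_single] using this
      exact sub_eq_zero.mp this
    have hs := hA2 hAne
    have hdetH_lt : H.det < N.det := by
      rw [hHN]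
      have := mul_lt_mul_of_pos_left hs hdetNpos
      simpa using this
    rw [det_mul, det_mul]
    calc M₁.det * M₂.det ≤ H.det ^ 2 := hmain
    _ < N.det ^ 2 := pow_lt_pow_left₀ hdetH_lt hHd0 two_ne_zero
    _ = N.det * N.det := by ring
end

section
/- Let n be a positive integer, let D = Diag(d₁, …, d_n) be a diagonal real n×n matrix with 1 > d₁ ≥ d₂ ≥ … ≥ d_n > 0, write D^{1/2} = Diag(√d₁, …, √d_n), and let Q_W be a symmetric real n×n matrix with D ⪯ Q_W ⪯ D⁻¹. Then the 3n×3n block matrix Q_s(Q_W) = [[I, D, D^{1/2}], [D, I, D^{1/2}Q_W], [D^{1/2}, Q_W D^{1/2}, Q_W]] is symmetric and positive semidefinite. -/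
open Matrix

/-- The `3n × 3n` covariance matrix
`Q_s(Q_W) = [[I, D, D^{1/2}], [D, I, D^{1/2} Q_W], [D^{1/2}, Q_W D^{1/2}, Q_W]]`
indexed by `(Fin n ⊕ Fin n) ⊕ Fin n`. -/
noncomputable def Qs (n : ℕ) (d : Fin n → ℝ) (QW : Matrix (Fin n) (Fin n) ℝ) :
    Matrix ((Fin n ⊕ Fin n) ⊕ Fin n) ((Fin n ⊕ Fin n) ⊕ Fin n) ℝ :=
  Matrix.fromBlocks
    (Matrix.fromBlocks 1 (Matrix.diagonal d) (Matrix.diagonal d) 1)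
    (Matrix.of (Sum.elim (Matrix.diagonal fun i => Real.sqrt (d i))
      ((Matrix.diagonal fun i => Real.sqrt (d i)) * QW)))
    (Matrix.of fun i => Sum.elim ((Matrix.diagonal fun i => Real.sqrt (d i)) i)
      ((QW * Matrix.diagonal fun i => Real.sqrt (d i)) i))
    QW

/-- A block diagonal matrix with positive semidefinite blocks is positive semidefinite. -/
lemma posSemidef_fromBlocks_diag {m₁ m₂ : Type*} [Fintype m₁] [Fintype m₂]
    {A : Matrix m₁ m₁ ℝ} {B : Matrix m₂ m₂ ℝ}
    (hA : A.PosSemidef) (hB : B.PosSemidef) :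
    (Matrix.fromBlocks A 0 0 B).PosSemidef := by
  refine Matrix.PosSemidef.of_dotProduct_mulVec_nonneg ?_ ?_
  · rw [Matrix.IsHermitian, Matrix.fromBlocks_conjTranspose, hA.1.eq, hB.1.eq]
    simp
  · intro x
    have h := add_nonneg (hA.dotProduct_mulVec_nonneg (x ∘ Sum.inl)) (hB.dotProduct_mulVec_nonneg (x ∘ Sum.inr))
    simpa [Matrix.fromBlocks_mulVec, dotProduct, Fintype.sum_sum_type,
      Matrix.mulVec, Sum.elim_inl, Sum.elim_inr] using h

/-- Let `D = diagonal d` with `1 > d 0 ≥ … ≥ d (n-1) > 0`, and let `Q_W` be a symmetric real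
`n × n` matrix with `D ⪯ Q_W ⪯ D⁻¹` (Loewner order).  Then the `3n × 3n` block matrix
`Q_s(Q_W) = [[I, D, D^{1/2}], [D, I, D^{1/2} Q_W], [D^{1/2}, Q_W D^{1/2}, Q_W]]`
is symmetric and positive semidefinite. -/
theorem Qs_posSemidef (n : ℕ) (hn : 0 < n) (d : Fin n → ℝ)
    (hd : ∀ i, 0 < d i ∧ d i < 1) (hmono : Antitone d)
    (QW : Matrix (Fin n) (Fin n) ℝ) (hQWsymm : QW.IsHermitian)
    (hDQW : (QW - Matrix.diagonal d).PosSemidef)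
    (hQWD : ((Matrix.diagonal d)⁻¹ - QW).PosSemidef) :
    (Qs n d QW).IsSymm ∧ (Qs n d QW).PosSemidef := by
  set S : Matrix (Fin n) (Fin n) ℝ := Matrix.diagonal (fun i => Real.sqrt (d i)) with hS
  set D : Matrix (Fin n) (Fin n) ℝ := Matrix.diagonal d with hD
  have hSS : S * S = D := by
    rw [hS, hD, diagonal_mul_diagonal]
    exact congrArg _ (funext fun i => Real.mul_self_sqrt (hd i).1.le)
  have hDinv : D⁻¹ = Matrix.diagonal (fun i => (d i)⁻¹) := by
    refine Matrix.inv_eq_right_inv ?_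
    rw [hD, diagonal_mul_diagonal, ← diagonal_one]
    exact congrArg _ (funext fun i => mul_inv_cancel₀ (hd i).1.ne')
  have hSDS : S * D⁻¹ * S = 1 := by
    rw [hDinv, hS, diagonal_mul_diagonal, diagonal_mul_diagonal, ← diagonal_one]
    refine congrArg _ (funext fun i => ?_)
    have h := (hd i).1
    rw [mul_comm, ← mul_assoc, Real.mul_self_sqrt h.le, mul_inv_cancel₀ h.ne']
  have hST : Sᴴ = S := by rw [hS, diagonal_conjTranspose]; simp
  have hDT : Dᵀ = D := by rw [hD, diagonal_transpose]
  have hSTr : Sᵀ = S := by rw [hS, diagonal_transpose]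
  have hDS : D * S = S * D := by
    rw [hD, hS, diagonal_mul_diagonal, diagonal_mul_diagonal]
    exact congrArg _ (funext fun i => mul_comm _ _)
  have hSDSm : S * D * S = D * D := by
    rw [hS, hD, diagonal_mul_diagonal, diagonal_mul_diagonal, diagonal_mul_diagonal]
    refine congrArg _ (funext fun i => ?_)
    rw [mul_comm, ← mul_assoc, Real.mul_self_sqrt (hd i).1.le]
  -- 1 - S*QW*S is psd
  have h1 : (1 - S * QW * S).PosSemidef := by
    have h := hQWD.mul_mul_conjTranspose_same S
    rw [hST] at h
    rwa [Matrix.mul_sub, Matrix.sub_mul, hSDS] at h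
  -- the factorization Qs = A * C * Aᵀ
  set A : Matrix ((Fin n ⊕ Fin n) ⊕ Fin n) ((Fin n ⊕ Fin n) ⊕ Fin n) ℝ :=
    Matrix.fromBlocks (Matrix.fromBlocks 1 0 D S) (Matrix.fromRows 0 1)
      (Matrix.fromCols S 1) 0 with hA
  set C : Matrix ((Fin n ⊕ Fin n) ⊕ Fin n) ((Fin n ⊕ Fin n) ⊕ Fin n) ℝ :=
    Matrix.fromBlocks (Matrix.fromBlocks 1 0 0 (QW - D)) 0 0 (1 - S * QW * S) with hC
  have eAC : A * C = Matrix.fromBlocks (Matrix.fromBlocks 1 0 D (S * (QW - D)))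
      (Matrix.fromRows 0 (1 - S * QW * S)) (Matrix.fromCols S (QW - D)) 0 := by
    rw [hA, hC, fromBlocks_multiply]
    simp only [Matrix.mul_zero, Matrix.zero_mul, add_zero, zero_add,
      fromBlocks_multiply, fromCols_mul_fromBlocks, fromRows_mul,
      Matrix.one_mul, Matrix.mul_one]
  have eAT : Aᵀ = Matrix.fromBlocks (Matrix.fromBlocks 1 D 0 S)
      (Matrix.fromRows S 1) (Matrix.fromCols 0 1) 0 := by
    rw [hA]
    simp only [fromBlocks_transpose, transpose_fromRows, transpose_fromCols,
      Matrix.transpose_zero, Matrix.transpose_one, hDT, hSTr]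
  have hfact : Qs n d QW = A * C * Aᵀ := by
    rw [eAC, eAT, fromBlocks_multiply]
    simp only [Matrix.mul_zero, Matrix.zero_mul, add_zero, zero_add,
      fromBlocks_multiply, fromBlocks_mul_fromRows, fromCols_mul_fromBlocks,
      fromRows_mul_fromCols, fromCols_mul_fromRows, fromBlocks_add,
      Matrix.one_mul, Matrix.mul_one]
    rw [Qs, ← hD, ← hS]
    refine fromBlocks_inj.mpr ⟨?_, ?_, ?_, ?_⟩
    · refine fromBlocks_inj.mpr ⟨by simp, by simp, by simp, ?_⟩
      rw [Matrix.mul_sub S QW D, Matrix.sub_mul, hSDSm]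
      abel
    · show Matrix.fromRows S (S * QW) = _
      rw [Matrix.mul_sub S QW D, hDS]
      exact (Matrix.fromRows_ext_iff _ _ _ _).mpr ⟨rfl, by abel⟩
    · show Matrix.fromCols S (QW * S) = _
      rw [Matrix.sub_mul QW D S, hDS]
      exact (Matrix.fromCols_ext_iff _ _ _ _).mpr ⟨rfl, by abel⟩
    · rw [hSS]
      abel
  -- C is positive semidefinite
  have hCpsd : C.PosSemidef := by
    rw [hC]
    exact posSemidef_fromBlocks_diag
      (posSemidef_fromBlocks_diag Matrix.PosSemidef.one hDQW) h1
  have hpsd : (Qs n d QW).PosSemidef := by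
    rw [hfact, show Aᵀ = Aᴴ from (Matrix.conjTranspose_eq_transpose_of_trivial A).symm]
    exact hCpsd.mul_mul_conjTranspose_same A
  refine ⟨?_, hpsd⟩
  rw [Matrix.IsSymm, ← Matrix.conjTranspose_eq_transpose_of_trivial, hpsd.1.eq]
end

section
/- Let n be a positive integer, let D = Diag(d₁, …, d_n) be a diagonal real n×n matrix with 1 > d₁ ≥ d₂ ≥ … ≥ d_n > 0, and write D^{1/2} = Diag(√d₁, …, √d_n). For every symmetric real n×n matrix Q with D ⪯ Q ⪯ D⁻¹ such that both I − D^{1/2}Q⁻¹D^{1/2} and I − D^{1/2}Q D^{1/2} are positive definite, one has (1/2)·∑_{i=1}^n ln(1 − dᵢ²) − (1/2)·ln det((I − D^{1/2}Q⁻¹D^{1/2})(I − D^{1/2}Q D^{1/2})) ≥ (1/2)·∑_{i=1}^n ln((1 + dᵢ)/(1 − dᵢ)), with equality if and only if Q = I. -/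
open Matrix

section Helpers

variable {m : Type*} [Fintype m] [DecidableEq m]

lemma my_det_one_add {M : Matrix m m ℝ} (hM : M.IsHermitian) :
    (1 + M).det = ∏ i, (1 + hM.eigenvalues i) := by
  have hU : (hM.eigenvectorUnitary : Matrix m m ℝ) *
      star (hM.eigenvectorUnitary : Matrix m m ℝ) = 1 :=
    Matrix.mem_unitaryGroup_iff.mp hM.eigenvectorUnitary.2
  have key : (1 + M) = (hM.eigenvectorUnitary : Matrix m m ℝ) *
      (1 + diagonal (RCLike.ofReal ∘ hM.eigenvalues)) *
      star (hM.eigenvectorUnitary : Matrix m m ℝ) := by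
    have hs := hM.spectral_theorem
    rw [Unitary.conjStarAlgAut_apply] at hs
    rw [Matrix.mul_add, Matrix.add_mul, Matrix.mul_one, hU, ← hs]
  rw [key, Matrix.det_mul_right_comm, hU, Matrix.one_mul]
  have h2 : (1 : Matrix m m ℝ) + diagonal (RCLike.ofReal ∘ hM.eigenvalues)
      = diagonal (fun i => 1 + hM.eigenvalues i) := by
    rw [← Matrix.diagonal_one, Matrix.diagonal_add]
    congr 1
  rw [h2, Matrix.det_diagonal]

lemma my_det_one_add_psd {M : Matrix m m ℝ} (hM : M.PosSemidef) :
    1 ≤ (1 + M).det ∧ ((1 + M).det = 1 → M = 0) := by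
  rw [my_det_one_add hM.1]
  have h1 : ∀ i ∈ Finset.univ, (1:ℝ) ≤ 1 + hM.1.eigenvalues i := fun i _ =>
    le_add_of_nonneg_right (hM.eigenvalues_nonneg i)
  have hpos : ∀ i : m, (0:ℝ) < 1 + hM.1.eigenvalues i := fun i =>
    lt_of_lt_of_le one_pos (h1 i (Finset.mem_univ i))
  constructor
  · calc (1:ℝ) = ∏ _i : m, 1 := by simp
      _ ≤ _ := Finset.prod_le_prod (fun i _ => zero_le_one) h1
  · intro h
    have hzero : ∀ i, hM.1.eigenvalues i = 0 := by
      have hlog : ∑ i, Real.log (1 + hM.1.eigenvalues i) = 0 := by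
        rw [← Real.log_prod (fun i _ => (hpos i).ne'), h, Real.log_one]
      intro i
      have hnn : ∀ i ∈ Finset.univ, (0:ℝ) ≤ Real.log (1 + hM.1.eigenvalues i) :=
        fun i hi => Real.log_nonneg (h1 i hi)
      have := (Finset.sum_eq_zero_iff_of_nonneg hnn).mp hlog i (Finset.mem_univ i)
      rcases Real.log_eq_zero.mp this with h' | h' | h' <;> nlinarith [hpos i]
    have hdiag : diagonal (RCLike.ofReal ∘ hM.1.eigenvalues) = (0 : Matrix m m ℝ) := by
      have : (RCLike.ofReal ∘ hM.1.eigenvalues : m → ℝ) = fun _ => 0 := by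
        funext i; simp [hzero i]
      rw [this, Matrix.diagonal_zero]
    have := hM.1.spectral_theorem
    rw [hdiag] at this
    simpa using this

lemma my_det_add_psd {C N : Matrix m m ℝ} (hC : C.PosDef) (hN : N.PosSemidef) :
    C.det ≤ (C + N).det ∧ ((C + N).det = C.det → N = 0) := by
  obtain ⟨R, hR, hRR⟩ : ∃ R : Matrix m m ℝ, R.PosSemidef ∧ R * R = C :=
    by open scoped MatrixOrder in
      exact ⟨CFC.sqrt C, (CFC.sqrt_nonneg C).posSemidef, CFC.sqrt_mul_sqrt_self C hC.posSemidef.nonneg⟩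
  have hdetR : R.det ≠ 0 := by
    intro h
    have := hC.det_pos
    rw [← hRR, Matrix.det_mul, h, mul_zero] at this
    exact lt_irrefl _ this
  have hRi : R * R⁻¹ = 1 := Matrix.mul_nonsing_inv R (isUnit_iff_ne_zero.mpr hdetR)
  have hRi' : R⁻¹ * R = 1 := Matrix.nonsing_inv_mul R (isUnit_iff_ne_zero.mpr hdetR)
  have hRinvH : (R⁻¹).IsHermitian := hR.1.inv
  have hM : (R⁻¹ * N * R⁻¹).PosSemidef := by
    have := hN.conjTranspose_mul_mul_same (R⁻¹)
    rwa [hRinvH.eq] at this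
  have hkey : C + N = R * (1 + R⁻¹ * N * R⁻¹) * R := by
    have hstep : R * (1 + R⁻¹ * N * R⁻¹) * R
        = R * R + (R * R⁻¹) * N * (R⁻¹ * R) := by noncomm_ring
    rw [hstep, hRR, hRi, hRi', Matrix.one_mul, Matrix.mul_one]
  have hdRR : R.det * R.det = C.det := by rw [← Matrix.det_mul, hRR]
  have hdet : (C + N).det = C.det * (1 + R⁻¹ * N * R⁻¹).det := by
    rw [hkey, Matrix.det_mul, Matrix.det_mul, ← hdRR]
    ring
  obtain ⟨ho, he⟩ := my_det_one_add_psd hM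
  constructor
  · rw [hdet]
    exact le_mul_of_one_le_right hC.det_pos.le ho
  · intro h
    rw [hdet] at h
    have h1 : (1 + R⁻¹ * N * R⁻¹).det = 1 :=
      mul_left_cancel₀ hC.det_pos.ne' (by rw [h, mul_one])
    have hM0 := he h1
    have hCN : C + N = C := by
      rw [hkey, hM0, add_zero, Matrix.mul_one, hRR]
    exact add_eq_left.mp hCN

lemma my_det_amgm {A B : Matrix m m ℝ} (hA : A.PosDef) (hB : B.PosSemidef) :
    (4:ℝ) ^ (Fintype.card m) * (A.det * B.det) ≤ ((A + B).det) ^ 2 := by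
  obtain ⟨R, hR, hRR⟩ : ∃ R : Matrix m m ℝ, R.PosSemidef ∧ R * R = A :=
    by open scoped MatrixOrder in
      exact ⟨CFC.sqrt A, (CFC.sqrt_nonneg A).posSemidef, CFC.sqrt_mul_sqrt_self A hA.posSemidef.nonneg⟩
  have hdetR : R.det ≠ 0 := by
    intro h
    have := hA.det_pos
    rw [← hRR, Matrix.det_mul, h, mul_zero] at this
    exact lt_irrefl _ this
  have hRi : R * R⁻¹ = 1 := Matrix.mul_nonsing_inv R (isUnit_iff_ne_zero.mpr hdetR)
  have hRi' : R⁻¹ * R = 1 := Matrix.nonsing_inv_mul R (isUnit_iff_ne_zero.mpr hdetR)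
  have hRinvH : (R⁻¹).IsHermitian := hR.1.inv
  have hM : (R⁻¹ * B * R⁻¹).PosSemidef := by
    have := hB.conjTranspose_mul_mul_same (R⁻¹)
    rwa [hRinvH.eq] at this
  have hBeq : B = R * (R⁻¹ * B * R⁻¹) * R := by
    have hstep : R * (R⁻¹ * B * R⁻¹) * R = (R * R⁻¹) * B * (R⁻¹ * R) := by
      noncomm_ring
    rw [hstep, hRi, hRi', Matrix.one_mul, Matrix.mul_one]
  have hkey : A + B = R * (1 + R⁻¹ * B * R⁻¹) * R := by
    have hstep : R * (1 + R⁻¹ * B * R⁻¹) * R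
        = R * R + R * (R⁻¹ * B * R⁻¹) * R := by noncomm_ring
    rw [hstep, hRR, ← hBeq]
  have hdRR : R.det * R.det = A.det := by rw [← Matrix.det_mul, hRR]
  have hdetB : B.det = A.det * (R⁻¹ * B * R⁻¹).det := by
    conv_lhs => rw [hBeq]
    rw [Matrix.det_mul, Matrix.det_mul, ← hdRR]
    ring
  have hdetAB : (A + B).det = A.det * (1 + R⁻¹ * B * R⁻¹).det := by
    rw [hkey, Matrix.det_mul, Matrix.det_mul, ← hdRR]
    ring
  -- eigenvalue inequality
  have hev : (4:ℝ) ^ (Fintype.card m) * (R⁻¹ * B * R⁻¹).det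
      ≤ ((1 + R⁻¹ * B * R⁻¹).det) ^ 2 := by
    have hdM : (R⁻¹ * B * R⁻¹).det = ∏ i, hM.1.eigenvalues i := by
      have := hM.1.det_eq_prod_eigenvalues
      simpa using this
    rw [hdM, my_det_one_add hM.1, ← Finset.prod_pow]
    calc (4:ℝ) ^ (Fintype.card m) * ∏ i, hM.1.eigenvalues i
        = ∏ i, (4 * hM.1.eigenvalues i) := by
          rw [Finset.prod_mul_distrib, Finset.prod_const, Finset.card_univ]
      _ ≤ ∏ i, (1 + hM.1.eigenvalues i) ^ 2 := by
          refine Finset.prod_le_prod (fun i _ => mul_nonneg (by norm_num) (hM.eigenvalues_nonneg i)) ?_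
          intro i _
          nlinarith [sq_nonneg (1 - hM.1.eigenvalues i)]
  calc (4:ℝ) ^ (Fintype.card m) * (A.det * B.det)
      = A.det ^ 2 * ((4:ℝ) ^ (Fintype.card m) * (R⁻¹ * B * R⁻¹).det) := by
        rw [hdetB]; ring
    _ ≤ A.det ^ 2 * ((1 + R⁻¹ * B * R⁻¹).det) ^ 2 :=
        mul_le_mul_of_nonneg_left hev (sq_nonneg _)
    _ = ((A + B).det) ^ 2 := by rw [hdetAB]; ring

end Helpers

/-- Let `D = diagonal d` with `1 > d 0 ≥ … ≥ d (n-1) > 0` and `D^{1/2} = diagonal (√d)`.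
For every symmetric real `n × n` matrix `Q` with `D ⪯ Q ⪯ D⁻¹` such that both
`I - D^{1/2} Q⁻¹ D^{1/2}` and `I - D^{1/2} Q D^{1/2}` are positive definite, the mutual
information expression
`(1/2)·∑ᵢ ln(1 - dᵢ²) - (1/2)·ln det((I - D^{1/2} Q⁻¹ D^{1/2})(I - D^{1/2} Q D^{1/2}))`
is at least `(1/2)·∑ᵢ ln((1 + dᵢ)/(1 - dᵢ))`, with equality if and only if `Q = I`
(Wyner's common information is uniquely attained at `Q = I`). -/
theorem wyner_common_information_optimum (n : ℕ) (hn : 0 < n) (d : Fin n → ℝ)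
    (hd : ∀ i, 0 < d i ∧ d i < 1) (hmono : Antitone d)
    (Q : Matrix (Fin n) (Fin n) ℝ) (hQsymm : Q.IsHermitian)
    (hDQ : (Q - Matrix.diagonal d).PosSemidef)
    (hQD : ((Matrix.diagonal d)⁻¹ - Q).PosSemidef)
    (hpd₁ : (1 - Matrix.diagonal (fun i => Real.sqrt (d i)) * Q⁻¹ *
        Matrix.diagonal (fun i => Real.sqrt (d i))).PosDef)
    (hpd₂ : (1 - Matrix.diagonal (fun i => Real.sqrt (d i)) * Q *
        Matrix.diagonal (fun i => Real.sqrt (d i))).PosDef) :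
    ((1 / 2 : ℝ) * ∑ i, Real.log ((1 + d i) / (1 - d i)) ≤
      (1 / 2 : ℝ) * (∑ i, Real.log (1 - d i ^ 2)) -
        (1 / 2 : ℝ) * Real.log
          (((1 - Matrix.diagonal (fun i => Real.sqrt (d i)) * Q⁻¹ *
              Matrix.diagonal (fun i => Real.sqrt (d i))) *
            (1 - Matrix.diagonal (fun i => Real.sqrt (d i)) * Q *
              Matrix.diagonal (fun i => Real.sqrt (d i)))).det) ∧
    (((1 / 2 : ℝ) * (∑ i, Real.log (1 - d i ^ 2)) -
        (1 / 2 : ℝ) * Real.log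
          (((1 - Matrix.diagonal (fun i => Real.sqrt (d i)) * Q⁻¹ *
              Matrix.diagonal (fun i => Real.sqrt (d i))) *
            (1 - Matrix.diagonal (fun i => Real.sqrt (d i)) * Q *
              Matrix.diagonal (fun i => Real.sqrt (d i)))).det) =
      (1 / 2 : ℝ) * ∑ i, Real.log ((1 + d i) / (1 - d i))) ↔ Q = 1)) := by
  have hd0 : ∀ i, 0 < d i := fun i => (hd i).1
  have hd1 : ∀ i, d i < 1 := fun i => (hd i).2
  set S := Matrix.diagonal (fun i => Real.sqrt (d i)) with hSdef
  set A := (1 : Matrix (Fin n) (Fin n) ℝ) - S * Q⁻¹ * S with hAdef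
  set B := (1 : Matrix (Fin n) (Fin n) ℝ) - S * Q * S with hBdef
  have hSH : S.IsHermitian := Matrix.isHermitian_diagonal _
  have hSS : S * S = Matrix.diagonal d := by
    rw [hSdef, Matrix.diagonal_mul_diagonal]
    exact congrArg _ (funext fun i => Real.mul_self_sqrt (hd0 i).le)
  have hSdet : S.det ≠ 0 := by
    rw [hSdef, Matrix.det_diagonal]
    exact (Finset.prod_pos fun i _ => Real.sqrt_pos.2 (hd0 i)).ne'
  have hDpd : (Matrix.diagonal d).PosDef := Matrix.posDef_diagonal_iff.2 hd0
  have hQpd : Q.PosDef := by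
    have h : Q = Matrix.diagonal d + (Q - Matrix.diagonal d) := by abel
    rw [h]; exact hDpd.add_posSemidef hDQ
  obtain ⟨R, hR, hRR⟩ : ∃ R : Matrix (Fin n) (Fin n) ℝ, R.PosSemidef ∧ R * R = Q :=
    by open scoped MatrixOrder in
      exact ⟨CFC.sqrt Q, (CFC.sqrt_nonneg Q).posSemidef, CFC.sqrt_mul_sqrt_self Q hQpd.posSemidef.nonneg⟩
  have hdetR : R.det ≠ 0 := by
    intro h
    have := hQpd.det_pos
    rw [← hRR, Matrix.det_mul, h, mul_zero] at this
    exact lt_irrefl _ this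
  have hRi : R * R⁻¹ = 1 := Matrix.mul_nonsing_inv R (isUnit_iff_ne_zero.mpr hdetR)
  have hRi' : R⁻¹ * R = 1 := Matrix.nonsing_inv_mul R (isUnit_iff_ne_zero.mpr hdetR)
  have hQinv : Q⁻¹ = R⁻¹ * R⁻¹ := by rw [← hRR, Matrix.mul_inv_rev]
  have hTT : (R - R⁻¹)ᴴ * (R - R⁻¹) = Q + Q⁻¹ - 2 := by
    rw [(hR.1.sub hR.1.inv).eq]
    have hstep : (R - R⁻¹) * (R - R⁻¹)
        = R * R + R⁻¹ * R⁻¹ - (R * R⁻¹ + R⁻¹ * R) := by noncomm_ring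
    rw [hstep, hRR, ← hQinv, hRi, hRi', one_add_one_eq_two]
  have hXpsd : (Q + Q⁻¹ - 2).PosSemidef :=
    hTT ▸ Matrix.posSemidef_conjTranspose_mul_self _
  have hXzero : Q + Q⁻¹ - 2 = 0 → Q = 1 := by
    intro h0
    have hT0 : R - R⁻¹ = 0 :=
      Matrix.conjTranspose_mul_self_eq_zero.mp (by rw [hTT, h0])
    have hRe : R = R⁻¹ := sub_eq_zero.mp hT0
    rw [← hRR]
    nth_rewrite 2 [hRe]
    exact hRi
  set N := S * (Q + Q⁻¹ - 2) * S with hNdef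
  have hNpsd : N.PosSemidef := by
    have := hXpsd.conjTranspose_mul_mul_same S
    rwa [hSH.eq] at this
  set C := (1 : Matrix (Fin n) (Fin n) ℝ) - Matrix.diagonal d with hCdef
  have h2C : A + B + N = C + C := by
    have h2eq : (2 : Matrix (Fin n) (Fin n) ℝ) = 1 + 1 := one_add_one_eq_two.symm
    rw [hAdef, hBdef, hNdef, hCdef, ← hSS, h2eq]
    noncomm_ring
  have hCd : C = Matrix.diagonal (fun i => 1 - d i) := by
    rw [hCdef, ← Matrix.diagonal_one, Matrix.diagonal_sub]
  have hCpd : C.PosDef := by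
    rw [hCd]; exact Matrix.posDef_diagonal_iff.2 fun i => by linarith [hd1 i]
  set p := ∏ i, (1 - d i) with hpdef
  have hp : 0 < p := Finset.prod_pos fun i _ => by linarith [hd1 i]
  have hdetC : C.det = p := by rw [hCd, Matrix.det_diagonal]
  have hApd : A.PosDef := hpd₁
  have hBpd : B.PosDef := hpd₂
  have hABpd : (A + B).PosDef := hApd.add hBpd
  have hcard : Fintype.card (Fin n) = n := Fintype.card_fin n
  have hdetCC : (C + C).det = 2 ^ n * p := by
    have h2 : C + C = (2 : ℝ) • C := (two_smul ℝ C).symm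
    rw [h2, Matrix.det_smul, hcard, hdetC]
  obtain ⟨hmono', heq'⟩ := my_det_add_psd hABpd hNpsd
  have hABle : (A + B).det ≤ 2 ^ n * p := by
    rw [← hdetCC, ← h2C]; exact hmono'
  have hamgm := my_det_amgm hApd hBpd.posSemidef
  rw [hcard] at hamgm
  have hab_pos : 0 < A.det * B.det := mul_pos hApd.det_pos hBpd.det_pos
  have hsq : ((2 : ℝ) ^ n * p) ^ 2 = 4 ^ n * p ^ 2 := by
    rw [mul_pow]
    congr 1
    rw [← pow_mul, mul_comm, pow_mul]
    norm_num
  have key1 : A.det * B.det ≤ p ^ 2 := by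
    have h2 : ((A + B).det) ^ 2 ≤ ((2 : ℝ) ^ n * p) ^ 2 :=
      pow_le_pow_left₀ hABpd.det_pos.le hABle 2
    have h4 : (0 : ℝ) < 4 ^ n := by positivity
    nlinarith [hamgm]
  have key2 : A.det * B.det = p ^ 2 → Q = 1 := by
    intro h
    have hppos : (0 : ℝ) < 2 ^ n * p := by positivity
    have hge : (2 : ℝ) ^ n * p ≤ (A + B).det := by
      have h2 : ((2 : ℝ) ^ n * p) ^ 2 ≤ ((A + B).det) ^ 2 := by
        rw [hsq, ← h]; exact hamgm
      nlinarith [hABpd.det_pos]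
    have heqdet : ((A + B) + N).det = (A + B).det := by
      rw [h2C, hdetCC]
      exact (le_antisymm hABle hge).symm
    have hN0 := heq' heqdet
    apply hXzero
    have hSi : S * S⁻¹ = 1 := Matrix.mul_nonsing_inv S (isUnit_iff_ne_zero.mpr hSdet)
    have hSi' : S⁻¹ * S = 1 := Matrix.nonsing_inv_mul S (isUnit_iff_ne_zero.mpr hSdet)
    have hcalc : S⁻¹ * N * S⁻¹ = Q + Q⁻¹ - 2 := by
      rw [hNdef]
      calc S⁻¹ * (S * (Q + Q⁻¹ - 2) * S) * S⁻¹
          = (S⁻¹ * S) * (Q + Q⁻¹ - 2) * (S * S⁻¹) := by noncomm_ring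
        _ = Q + Q⁻¹ - 2 := by rw [hSi, hSi', Matrix.one_mul, Matrix.mul_one]
    rw [← hcalc, hN0, Matrix.mul_zero, Matrix.zero_mul]
  have key3 : Q = 1 → A.det * B.det = p ^ 2 := by
    intro h
    have hA1 : A = C := by rw [hAdef, h, inv_one, Matrix.mul_one, hSS, hCdef]
    have hB1 : B = C := by rw [hBdef, h, Matrix.mul_one, hSS, hCdef]
    rw [hA1, hB1, hdetC]; ring
  -- the logarithmic part
  have hlp : ∑ i, Real.log (1 - d i) = Real.log p := by
    rw [hpdef, Real.log_prod fun i _ => by have := hd1 i; intro hc; linarith [hd1 i, (sub_eq_zero.mp hc)]]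
  have hsum : ∑ i, Real.log (1 - d i ^ 2)
      = (∑ i, Real.log ((1 + d i) / (1 - d i))) + 2 * Real.log p := by
    rw [← hlp, Finset.mul_sum, ← Finset.sum_add_distrib]
    refine Finset.sum_congr rfl fun i _ => ?_
    have h1 : (0 : ℝ) < 1 + d i := by linarith [hd0 i]
    have h2 : (0 : ℝ) < 1 - d i := by linarith [hd1 i]
    have hfac : 1 - d i ^ 2 = (1 + d i) * (1 - d i) := by ring
    rw [hfac, Real.log_mul h1.ne' h2.ne', Real.log_div h1.ne' h2.ne']
    ring
  have hlp2 : Real.log (p ^ 2) = 2 * Real.log p := by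
    rw [Real.log_pow]; norm_num
  have hp2 : (0 : ℝ) < p ^ 2 := by positivity
  rw [Matrix.det_mul, hsum]
  refine ⟨?_, ?_, ?_⟩
  · have := (Real.log_le_log_iff hab_pos hp2).2 key1
    rw [hlp2] at this
    linarith
  · intro h
    apply key2
    refine Real.log_injOn_pos (Set.mem_Ioi.mpr hab_pos) (Set.mem_Ioi.mpr hp2) ?_
    rw [hlp2]
    linarith
  · intro h
    rw [key3 h, hlp2]
    ring
end

section
/- Let p₁, p₂ be positive integers and let Q ∈ ℝ^{(p₁+p₂)×(p₁+p₂)} be symmetric positive definite with blocks Q₁₁ ∈ ℝ^{p₁×p₁}, Q₂₂ ∈ ℝ^{p₂×p₂} and Q₁₂ ∈ ℝ^{p₁×p₂}. Then there exist invertible matrices S₁ ∈ ℝ^{p₁×p₁}, S₂ ∈ ℝ^{p₂×p₂}, nonnegative integers p₁₁ and p₁₂ with p₁₁ + p₁₂ ≤ min(p₁, p₂), and reals 1 > d₁ ≥ d₂ ≥ … ≥ d_{p₁₂} > 0, such that S₁Q₁₁S₁ᵀ = I_{p₁}, S₂Q₂₂S₂ᵀ = I_{p₂}, and S₁Q₁₂S₂ᵀ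 = D₃, where D₃ ∈ ℝ^{p₁×p₂} has entries D₃(i,i) = 1 for 1 ≤ i ≤ p₁₁, D₃(i,i) = d_{i−p₁₁} for p₁₁ < i ≤ p₁₁ + p₁₂, and all other entries zero. (Existence of the canonical variable form of a tuple of Gaussian random vectors.) -/
open Matrix

lemma aux_sqrt_inv {n : ℕ} (P : Matrix (Fin n) (Fin n) ℝ) (hP : P.PosDef) :
    ∃ A : Matrix (Fin n) (Fin n) ℝ, IsUnit A ∧ Aᵀ = A ∧ A * P * A = 1 ∧ A * A = P⁻¹ := by
  open scoped MatrixOrder in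
  set R := CFC.sqrt P with hRdef
  open scoped MatrixOrder in
  have hRR : R * R = P := CFC.sqrt_mul_sqrt_self P hP.posSemidef.nonneg
  open scoped MatrixOrder in
  have hRsym : Rᵀ = R := by
    have h := (CFC.sqrt_nonneg P).posSemidef.1
    rw [IsHermitian, conjTranspose_eq_transpose_of_trivial] at h
    exact h
  have hdet : IsUnit R.det := by
    have h : R.det * R.det = P.det := by rw [← det_mul, hRR]
    have : P.det ≠ 0 := hP.det_pos.ne'
    exact isUnit_iff_ne_zero.2 fun h0 => this (by rw [← h, h0, mul_zero])
  have hRunit : IsUnit R := (isUnit_iff_isUnit_det _).2 hdet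
  refine ⟨R⁻¹, ?_, ?_, ?_, ?_⟩
  · exact isUnit_nonsing_inv_iff.2 hRunit
  · rw [transpose_nonsing_inv, hRsym]
  · rw [← hRR, ← Matrix.mul_assoc, Matrix.mul_assoc R⁻¹ R R, ← Matrix.mul_assoc R⁻¹ R,
      nonsing_inv_mul _ hdet, Matrix.one_mul, mul_nonsing_inv _ hdet]
  · rw [← hRR, Matrix.mul_inv_rev]

lemma aux_blocks {p₁ p₂ : ℕ} (Q₁₁ : Matrix (Fin p₁) (Fin p₁) ℝ) (Q₂₂ : Matrix (Fin p₂) (Fin p₂) ℝ)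
    (Q₁₂ : Matrix (Fin p₁) (Fin p₂) ℝ)
    (hQ : (Matrix.fromBlocks Q₁₁ Q₁₂ Q₁₂ᵀ Q₂₂).PosDef) :
    Q₁₁.PosDef ∧ Q₂₂.PosDef ∧ (Q₁₁ - Q₁₂ * Q₂₂⁻¹ * Q₁₂ᵀ).PosDef := by
  have hBH : Q₁₂ᴴ = Q₁₂ᵀ := conjTranspose_eq_transpose_of_trivial _
  have hQ' : (Matrix.fromBlocks Q₁₁ Q₁₂ Q₁₂ᴴ Q₂₂).PosDef := by rwa [hBH]
  have herm := isHermitian_fromBlocks_iff.mp hQ'.1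
  have h11 : Q₁₁.IsHermitian := herm.1
  have h22 : Q₂₂.IsHermitian := herm.2.2.2
  have hQ11 : Q₁₁.PosDef := by
    refine .of_dotProduct_mulVec_pos h11 fun x hx => ?_
    have h := hQ'.dotProduct_mulVec_pos (x := Sum.elim x 0) (fun h0 => hx (funext fun i => congrFun h0 (Sum.inl i)))
    simpa [fromBlocks_mulVec, Function.star_sumElim, dotProduct] using h
  have hQ22 : Q₂₂.PosDef := by
    refine .of_dotProduct_mulVec_pos h22 fun x hx => ?_
    have h := hQ'.dotProduct_mulVec_pos (x := Sum.elim 0 x) (fun h0 => hx (funext fun i => congrFun h0 (Sum.inr i)))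
    simpa [fromBlocks_mulVec, Function.star_sumElim, dotProduct] using h
  refine ⟨hQ11, hQ22, .of_dotProduct_mulVec_pos ?_ ?_⟩
  · have : (Q₁₂ * Q₂₂⁻¹ * Q₁₂ᴴ).IsHermitian := isHermitian_mul_mul_conjTranspose _ h22.inv
    rw [hBH] at this
    exact h11.sub this
  · intro x hx
    haveI : Invertible Q₂₂ := hQ22.isUnit.invertible
    set y : Fin p₂ → ℝ := -((Q₂₂⁻¹ * Q₁₂ᴴ) *ᵥ x) with hy
    have key := schur_complement_eq₂₂ Q₁₁ Q₁₂ (x := x) (y := y) h22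
    have hz : (Q₂₂⁻¹ * Q₁₂ᴴ) *ᵥ x + y = 0 := by simp [hy]
    rw [hz] at key
    have hpos := hQ'.dotProduct_mulVec_pos (x := Sum.elim x y) (fun h0 => hx (funext fun i => congrFun h0 (Sum.inl i)))
    rw [dotProduct_mulVec] at hpos
    rw [key] at hpos
    simpa [dotProduct_mulVec, hBH] using hpos

lemma aux_posdef_conj {n : ℕ} (A S : Matrix (Fin n) (Fin n) ℝ) (hA : IsUnit A)
    (hS : S.PosDef) : (A * S * Aᵀ).PosDef := by
  refine .of_dotProduct_mulVec_pos ?_ ?_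
  · have h := isHermitian_mul_mul_conjTranspose A hS.1
    rwa [conjTranspose_eq_transpose_of_trivial] at h
  · intro x hx
    have hy : Aᵀ *ᵥ x ≠ 0 := by
      have hinj : Function.Injective (Aᵀ.mulVec) := by
        rw [mulVec_injective_iff_isUnit]
        exact (isUnit_iff_isUnit_det _).2 (by rw [det_transpose]; exact (isUnit_iff_isUnit_det _).1 hA)
      intro h0
      exact hx (hinj (by rw [h0, mulVec_zero]))
    have h := hS.dotProduct_mulVec_pos hy
    calc (0:ℝ) < star (Aᵀ *ᵥ x) ⬝ᵥ (S *ᵥ (Aᵀ *ᵥ x)) := h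
    _ = star x ⬝ᵥ ((A * S * Aᵀ) *ᵥ x) := by
        rw [star_trivial, star_trivial, ← mulVec_mulVec, ← mulVec_mulVec,
          dotProduct_mulVec x A, ← mulVec_transpose]

lemma aux_svd {p₁ p₂ : ℕ} (M : Matrix (Fin p₁) (Fin p₂) ℝ)
    (hM1 : ((1 : Matrix (Fin p₁) (Fin p₁) ℝ) - M * Mᵀ).PosDef) :
    ∃ (U : Matrix (Fin p₁) (Fin p₁) ℝ) (V : Matrix (Fin p₂) (Fin p₂) ℝ) (r : ℕ) (d : ℕ → ℝ),
      Uᵀ * U = 1 ∧ Vᵀ * V = 1 ∧ r ≤ min p₁ p₂ ∧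
      (∀ i < r, 0 < d i ∧ d i < 1) ∧
      (∀ i j, i ≤ j → j < r → d j ≤ d i) ∧
      (∀ (i : Fin p₁) (j : Fin p₂), (Uᵀ * M * V) i j =
        if (i : ℕ) = (j : ℕ) then (if (i : ℕ) < r then d (i : ℕ) else 0) else 0) := by
  classical
  have hN : (M * Mᵀ).PosSemidef := by
    have := posSemidef_self_mul_conjTranspose M
    rwa [conjTranspose_eq_transpose_of_trivial] at this
  set N := M * Mᵀ with hNdef
  have hH : N.IsHermitian := hN.1
  set σ : Equiv.Perm (Fin p₁) := Tuple.sort (fun i => -hH.eigenvalues i) with hσdef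
  set lam : Fin p₁ → ℝ := fun i => hH.eigenvalues (σ i) with hlamdef
  have hanti : ∀ i j : Fin p₁, i ≤ j → lam j ≤ lam i := by
    intro i j hij
    have := Tuple.monotone_sort (fun i => -hH.eigenvalues i) hij
    simpa [hlamdef] using this
  set u : Fin p₁ → (Fin p₁ → ℝ) := fun j => ⇑(hH.eigenvectorBasis (σ j)) with hudef
  have f1 : ∀ j, N *ᵥ u j = lam j • u j := fun j => hH.mulVec_eigenvectorBasis (σ j)
  have f2 : ∀ i j, u i ⬝ᵥ u j = if i = j then 1 else 0 := by
    intro i j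
    have h := orthonormal_iff_ite.mp (hH.eigenvectorBasis).orthonormal (σ i) (σ j)
    simp only [Equiv.apply_eq_iff_eq] at h
    rw [← h]
    simp [PiLp.inner_apply, dotProduct, RCLike.inner_apply, starRingEnd_apply, hudef]
    exact Finset.sum_congr rfl fun _ _ => mul_comm _ _
  have f3 : ∀ j, 0 ≤ lam j := fun j => hN.eigenvalues_nonneg (σ j)
  have f4 : ∀ j, lam j < 1 := by
    intro j
    have hu0 : u j ≠ 0 := by
      intro h0
      have := f2 j j
      rw [h0] at this
      simp at this
    have h := hM1.dotProduct_mulVec_pos hu0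
    rw [star_trivial, sub_mulVec, one_mulVec, dotProduct_sub, f1, dotProduct_smul, f2] at h
    simp only [if_true, smul_eq_mul, mul_one] at h
    linarith
  set r : ℕ := (Finset.univ.filter (fun i : Fin p₁ => 0 < lam i)).card with hrdef
  have f6 : r ≤ p₁ := by
    calc r ≤ Finset.univ.card := Finset.card_le_card (Finset.filter_subset _ _)
    _ = p₁ := by simp
  have f5 : ∀ i : Fin p₁, (i : ℕ) < r ↔ 0 < lam i := by
    intro i
    constructor
    · intro hir
      by_contra hnot
      have hsub : (Finset.univ.filter (fun k : Fin p₁ => 0 < lam k)) ⊆ Finset.Iio i := by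
        intro k hk
        rw [Finset.mem_filter] at hk
        rw [Finset.mem_Iio]
        by_contra hk2
        exact hnot (lt_of_lt_of_le hk.2 (hanti i k (le_of_not_gt hk2)))
      have := Finset.card_le_card hsub
      rw [Fin.card_Iio] at this
      omega
    · intro hpos
      have hsub : Finset.Iic i ⊆ (Finset.univ.filter (fun k : Fin p₁ => 0 < lam k)) := by
        intro k hk
        rw [Finset.mem_Iic] at hk
        rw [Finset.mem_filter]
        exact ⟨Finset.mem_univ _, lt_of_lt_of_le hpos (hanti k i hk)⟩
      have := Finset.card_le_card hsub
      rw [Fin.card_Iic] at this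
      omega
  set s : Fin p₁ → ℝ := fun i => Real.sqrt (lam i) with hsdef
  have f7 : ∀ i j, (Mᵀ *ᵥ u i) ⬝ᵥ (Mᵀ *ᵥ u j) = if i = j then lam j else 0 := by
    intro i j
    rw [mulVec_transpose M (u i), ← dotProduct_mulVec, mulVec_mulVec, ← hNdef, f1,
      dotProduct_smul, f2]
    simp [mul_ite]
  have f8 : ∀ i, ¬ 0 < lam i → Mᵀ *ᵥ u i = 0 := by
    intro i hi
    have h0 : lam i = 0 := le_antisymm (le_of_not_gt hi) (f3 i)
    have := f7 i i
    rw [if_pos rfl, h0] at this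
    exact dotProduct_self_eq_zero.mp this
  set w' : Fin p₁ → (Fin p₂ → ℝ) := fun i => (s i)⁻¹ • (Mᵀ *ᵥ u i) with hw'def
  set w : Fin p₁ → EuclideanSpace ℝ (Fin p₂) := fun i => (WithLp.equiv 2 _).symm (w' i) with hwdef
  have hinner : ∀ x y : EuclideanSpace ℝ (Fin p₂),
      (inner ℝ x y : ℝ) = (WithLp.equiv 2 _ x) ⬝ᵥ (WithLp.equiv 2 _ y) := by
    intro x y
    simp [PiLp.inner_apply, dotProduct, RCLike.inner_apply, starRingEnd_apply]
    exact Finset.sum_congr rfl fun _ _ => mul_comm _ _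
  have hspos : ∀ i, 0 < lam i → 0 < s i := fun i hi => Real.sqrt_pos.mpr hi
  have f9 : ∀ i j, 0 < lam i → 0 < lam j →
      (inner ℝ (w i) (w j) : ℝ) = if i = j then 1 else 0 := by
    intro i j hi hj
    rw [hinner]
    have hwi : (WithLp.equiv 2 _) (w i) = w' i := rfl
    have hwj : (WithLp.equiv 2 _) (w j) = w' j := rfl
    rw [hwi, hwj, hw'def]
    simp only [smul_dotProduct, dotProduct_smul, f7, smul_eq_mul]
    rcases eq_or_ne i j with rfl | hne
    · rw [if_pos rfl, if_pos rfl]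
      have hs := hspos i hi
      rw [show lam i = s i * s i from (Real.mul_self_sqrt (f3 i)).symm]
      field_simp
    · rw [if_neg hne, if_neg hne, mul_zero, mul_zero]
  have f10 : r ≤ p₂ := by
    have hon : Orthonormal ℝ (fun k : Fin r => w ⟨k, lt_of_lt_of_le k.2 f6⟩) := by
      rw [orthonormal_iff_ite]
      intro a b
      have ha : 0 < lam ⟨a, lt_of_lt_of_le a.2 f6⟩ := (f5 _).mp a.2
      have hb : 0 < lam ⟨b, lt_of_lt_of_le b.2 f6⟩ := (f5 _).mp b.2
      rw [f9 _ _ ha hb]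
      congr 1
      simp [Fin.ext_iff]
    have := hon.linearIndependent.fintype_card_le_finrank
    simpa [finrank_euclideanSpace] using this
  set sset : Set (Fin p₂) := {j | (j : ℕ) < r} with hssetdef
  set v : Fin p₂ → EuclideanSpace ℝ (Fin p₂) :=
    fun j => if h : (j : ℕ) < r then w ⟨j, lt_of_lt_of_le h f6⟩ else 0 with hvdef
  have hon : Orthonormal ℝ (sset.restrict v) := by
    rw [orthonormal_iff_ite]
    rintro ⟨a, ha⟩ ⟨b, hb⟩
    have ha' : (a : ℕ) < r := ha
    have hb' : (b : ℕ) < r := hb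
    have hva : sset.restrict v ⟨a, ha⟩ = w ⟨a, lt_of_lt_of_le ha' f6⟩ := by
      exact dif_pos ha'
    have hvb : sset.restrict v ⟨b, hb⟩ = w ⟨b, lt_of_lt_of_le hb' f6⟩ := by
      exact dif_pos hb'
    rw [hva, hvb, f9 _ _ ((f5 _).mp ha') ((f5 _).mp hb')]
    congr 1
    simp [Fin.ext_iff, Subtype.ext_iff]
  obtain ⟨b, hb⟩ := hon.exists_orthonormalBasis_extension_of_card_eq
    (by simp [finrank_euclideanSpace])
  set bv : Fin p₂ → (Fin p₂ → ℝ) := fun j => WithLp.equiv 2 _ (b j) with hbvdef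
  set V : Matrix (Fin p₂) (Fin p₂) ℝ := Matrix.of fun k j => bv j k with hVdef
  set U : Matrix (Fin p₁) (Fin p₁) ℝ := Matrix.of fun k j => u j k with hUdef
  have hUU : Uᵀ * U = 1 := by
    ext i j
    have : (Uᵀ * U) i j = u i ⬝ᵥ u j := by
      simp [mul_apply, dotProduct, hUdef]
    rw [this, f2, one_apply]
  have hVV : Vᵀ * V = 1 := by
    ext i j
    have h1 : (Vᵀ * V) i j = bv i ⬝ᵥ bv j := by
      simp [mul_apply, dotProduct, hVdef]
    have h2 := orthonormal_iff_ite.mp b.orthonormal i j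
    rw [hinner] at h2
    have h3 : bv i ⬝ᵥ bv j = if i = j then 1 else 0 := h2
    rw [h1, h3, one_apply]
  have hbvdot : ∀ a c : Fin p₂, bv a ⬝ᵥ bv c = if a = c then 1 else 0 := by
    intro a c
    have h2 := orthonormal_iff_ite.mp b.orthonormal a c
    rw [hinner] at h2
    exact h2
  refine ⟨U, V, r, fun n => if h : n < p₁ then s ⟨n, h⟩ else 0, hUU, hVV,
    le_min f6 f10, ?_, ?_, ?_⟩
  · intro i hir
    have hip : i < p₁ := lt_of_lt_of_le hir f6
    have hpos : 0 < lam ⟨i, hip⟩ := (f5 _).mp hir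
    simp only [dif_pos hip]
    refine ⟨hspos _ hpos, ?_⟩
    rw [hsdef, show (1 : ℝ) = Real.sqrt 1 by simp]
    exact Real.sqrt_lt_sqrt (f3 _) (by simpa using f4 ⟨i, hip⟩)
  · intro i j hij hjr
    have hjp : j < p₁ := lt_of_lt_of_le hjr f6
    have hip : i < p₁ := lt_of_le_of_lt hij hjp
    simp only [dif_pos hip, dif_pos hjp, hsdef]
    exact Real.sqrt_le_sqrt (hanti ⟨i, hip⟩ ⟨j, hjp⟩ hij)
  · intro i j
    have hentry : (Uᵀ * M * V) i j = u i ⬝ᵥ (M *ᵥ bv j) := by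
      rw [Matrix.mul_assoc]
      simp [mul_apply, dotProduct, mulVec, hUdef, hVdef]
    rw [hentry]
    by_cases hjr : (j : ℕ) < r
    · set jh : Fin p₁ := ⟨j, lt_of_lt_of_le hjr f6⟩ with hjh
      have hbj : bv j = w' jh := by
        have h1 : b j = v j := hb j hjr
        show WithLp.equiv 2 _ (b j) = w' jh
        rw [h1]
        have h2 : v j = w jh := dif_pos hjr
        rw [h2]
        rfl
      have hlamj : 0 < lam jh := (f5 _).mp hjr
      have hsj : s jh ≠ 0 := ne_of_gt (hspos _ hlamj)
      have hMw : M *ᵥ w' jh = s jh • u jh := by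
        show M *ᵥ ((s jh)⁻¹ • (Mᵀ *ᵥ u jh)) = _
        rw [mulVec_smul, mulVec_mulVec, ← hNdef, f1, smul_smul]
        congr 1
        rw [show lam jh = s jh * s jh from (Real.mul_self_sqrt (f3 jh)).symm]
        field_simp
      rw [hbj, hMw, dotProduct_smul, f2]
      rcases eq_or_ne (i : ℕ) (j : ℕ) with heq | hne
      · have hij : i = jh := Fin.ext (by simp [hjh, heq])
        have hir : (i : ℕ) < r := by omega
        have hip : (i : ℕ) < p₁ := lt_of_lt_of_le hir f6
        rw [if_pos hij, if_pos heq, if_pos hir]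
        show s jh • 1 = if h : (i : ℕ) < p₁ then s ⟨(i : ℕ), h⟩ else 0
        rw [dif_pos hip]
        simp only [smul_eq_mul, mul_one]
        congr 1
        exact (Fin.ext (by simp [hjh, heq])).symm
      · have hij : i ≠ jh := fun h => hne (by rw [h])
        rw [if_neg hij, if_neg hne, smul_zero]

    · by_cases hi : 0 < lam i
      · have hir : (i : ℕ) < r := (f5 i).mpr hi
        set i₂ : Fin p₂ := ⟨i, lt_of_lt_of_le hir f10⟩ with hi₂
        have hsi : s i ≠ 0 := ne_of_gt (hspos _ hi)
        have hbi : bv i₂ = w' i := by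
          have h1 : b i₂ = v i₂ := hb i₂ hir
          show WithLp.equiv 2 _ (b i₂) = w' i
          rw [h1]
          have h2 : v i₂ = w ⟨(i₂ : ℕ), lt_of_lt_of_le hir f6⟩ := dif_pos hir
          rw [h2, show (⟨(i₂ : ℕ), lt_of_lt_of_le hir f6⟩ : Fin p₁) = i from Fin.ext rfl]
          rfl
        have hMu : Mᵀ *ᵥ u i = s i • bv i₂ := by
          rw [hbi]
          show _ = s i • ((s i)⁻¹ • (Mᵀ *ᵥ u i))
          rw [smul_smul, mul_inv_cancel₀ hsi, one_smul]
        rw [dotProduct_mulVec, ← mulVec_transpose, hMu, smul_dotProduct, hbvdot,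
          if_neg (show i₂ ≠ j from fun h => hjr (h ▸ hir)), smul_zero]
        symm
        split_ifs <;> first | rfl | omega
      · have hir : ¬ (i : ℕ) < r := fun h => hi ((f5 i).mp h)
        rw [dotProduct_mulVec, ← mulVec_transpose, f8 i hi, zero_dotProduct]
        symm
        split_ifs <;> first | rfl | omega

/-- **Existence of the canonical variable form** of a tuple of Gaussian random vectors.
Let `Q` be the symmetric positive-definite matrix with blocks `Q₁₁, Q₂₂, Q₁₂`.  Then there
exist invertible matrices `S₁, S₂`, natural numbers `p₁₁, p₁₂` with `p₁₁ + p₁₂ ≤ min p₁ p₂`,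
and reals `1 > d 0 ≥ d 1 ≥ … ≥ d (p₁₂ - 1) > 0` such that `S₁ Q₁₁ S₁ᵀ = I`,
`S₂ Q₂₂ S₂ᵀ = I`, and `S₁ Q₁₂ S₂ᵀ` is the `p₁ × p₂` matrix with `1` on the first `p₁₁`
diagonal entries, the canonical correlation coefficients `d` on the next `p₁₂` diagonal
entries, and `0` elsewhere. -/
theorem exists_canonical_variable_form (p₁ p₂ : ℕ) (hp₁ : 0 < p₁) (hp₂ : 0 < p₂)
    (Q₁₁ : Matrix (Fin p₁) (Fin p₁) ℝ) (Q₂₂ : Matrix (Fin p₂) (Fin p₂) ℝ)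
    (Q₁₂ : Matrix (Fin p₁) (Fin p₂) ℝ)
    (hQ : (Matrix.fromBlocks Q₁₁ Q₁₂ Q₁₂ᵀ Q₂₂).PosDef) :
    ∃ (S₁ : Matrix (Fin p₁) (Fin p₁) ℝ) (S₂ : Matrix (Fin p₂) (Fin p₂) ℝ)
      (p₁₁ p₁₂' : ℕ) (d : ℕ → ℝ),
      IsUnit S₁ ∧ IsUnit S₂ ∧
      p₁₁ + p₁₂' ≤ min p₁ p₂ ∧
      (∀ i < p₁₂', 0 < d i ∧ d i < 1) ∧
      (∀ i j, i ≤ j → j < p₁₂' → d j ≤ d i) ∧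
      S₁ * Q₁₁ * S₁ᵀ = 1 ∧
      S₂ * Q₂₂ * S₂ᵀ = 1 ∧
      (∀ (i : Fin p₁) (j : Fin p₂),
        (S₁ * Q₁₂ * S₂ᵀ) i j =
          if (i : ℕ) = (j : ℕ) then
            (if (i : ℕ) < p₁₁ then (1 : ℝ)
              else if (i : ℕ) < p₁₁ + p₁₂' then d ((i : ℕ) - p₁₁) else 0)
          else 0) := by
  obtain ⟨hQ11, hQ22, hSchur⟩ := aux_blocks Q₁₁ Q₂₂ Q₁₂ hQ
  obtain ⟨A₁, hA₁u, hA₁t, hA₁1, hA₁sq⟩ := aux_sqrt_inv Q₁₁ hQ11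
  obtain ⟨A₂, hA₂u, hA₂t, hA₂1, hA₂sq⟩ := aux_sqrt_inv Q₂₂ hQ22
  set M := A₁ * Q₁₂ * A₂ with hM
  have hMt : Mᵀ = A₂ * Q₁₂ᵀ * A₁ := by
    rw [hM, transpose_mul, transpose_mul, hA₁t, hA₂t, Matrix.mul_assoc]
  have hMM : M * Mᵀ = A₁ * (Q₁₂ * Q₂₂⁻¹ * Q₁₂ᵀ) * A₁ := by
    rw [hM, hMt, ← hA₂sq]
    simp only [Matrix.mul_assoc]
  have hM1 : ((1 : Matrix (Fin p₁) (Fin p₁) ℝ) - M * Mᵀ).PosDef := by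
    have key : (1 : Matrix (Fin p₁) (Fin p₁) ℝ) - M * Mᵀ
        = A₁ * (Q₁₁ - Q₁₂ * Q₂₂⁻¹ * Q₁₂ᵀ) * A₁ := by
      rw [hMM, Matrix.mul_sub, Matrix.sub_mul, hA₁1]
    have h2 := aux_posdef_conj A₁ _ hA₁u hSchur
    rw [hA₁t] at h2
    rwa [key]
  obtain ⟨U, V, r, d, hUU, hVV, hrmin, hd1, hd2, hUV⟩ := aux_svd M hM1
  have hUunit : IsUnit Uᵀ := by
    have hdet : U.det * U.det = 1 := by
      have h := congrArg Matrix.det hUU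
      rwa [det_mul, det_transpose, det_one] at h
    exact (isUnit_iff_isUnit_det _).2 (by rw [det_transpose]; exact IsUnit.of_mul_eq_one _ hdet)
  have hVunit : IsUnit Vᵀ := by
    have hdet : V.det * V.det = 1 := by
      have h := congrArg Matrix.det hVV
      rwa [det_mul, det_transpose, det_one] at h
    exact (isUnit_iff_isUnit_det _).2 (by rw [det_transpose]; exact IsUnit.of_mul_eq_one _ hdet)
  refine ⟨Uᵀ * A₁, Vᵀ * A₂, 0, r, d, hUunit.mul hA₁u, hVunit.mul hA₂u,
    by simpa using hrmin, hd1, hd2, ?_, ?_, ?_⟩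
  · have ht : (Uᵀ * A₁)ᵀ = A₁ * U := by rw [transpose_mul, transpose_transpose, hA₁t]
    rw [ht]
    calc Uᵀ * A₁ * Q₁₁ * (A₁ * U) = Uᵀ * (A₁ * Q₁₁ * A₁) * U := by
          simp only [Matrix.mul_assoc]
    _ = Uᵀ * U := by rw [hA₁1, Matrix.mul_one]
    _ = 1 := hUU
  · have ht : (Vᵀ * A₂)ᵀ = A₂ * V := by rw [transpose_mul, transpose_transpose, hA₂t]
    rw [ht]
    calc Vᵀ * A₂ * Q₂₂ * (A₂ * V) = Vᵀ * (A₂ * Q₂₂ * A₂) * V := by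
          simp only [Matrix.mul_assoc]
    _ = Vᵀ * V := by rw [hA₂1, Matrix.mul_one]
    _ = 1 := hVV
  · intro i j
    have hS : Uᵀ * A₁ * Q₁₂ * (Vᵀ * A₂)ᵀ = Uᵀ * M * V := by
      rw [transpose_mul, transpose_transpose, hA₂t, hM]
      simp only [Matrix.mul_assoc]
    rw [hS, hUV i j]
    simp only [Nat.zero_add, Nat.sub_zero, Nat.not_lt_zero, if_false]
end
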